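/- Let (𝔤, [·,·], ã) be a Lie algebra with nondegenerate symmetric bilinear form ã and infinitesimal Levi-Civita connection A. Say (𝔤,[·,·],ã) is a pseudo-Riemannian Lie algebra if [A_X Y, Z] + [X, A_Z Y] = 0 for all X,Y,Z. On the semidirect product 𝔤 ⋊ 𝔤 with bracket [(X,Y),(X',Y')] = ([X,X'],[X,Y']+[Y,X']) and complete form ã^c((X,Y),(X',Y')) = ã(X,Y') + ã(Y,X'), the infinitesimal Levi-Civita connection is B_{(X,Y)}(X',Y') = (A_X X', A_X Y' + A_Y X'). Then (𝔤,[·,·],ã) is a pseudo-Riemannian Lie algebra if and only if (𝔤 ⋊ 𝔤, [·,·]_{𝔤⋊𝔤}, ã^c) is a pseudo-Riemannian Lie algebra. -/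
import Mathlib


/-- `(𝔤,[·,·],ã)` is a pseudo-Riemannian Lie algebra if and only if the
semidirect product `𝔤 ⋊ 𝔤` with the complete lift form `ã^c` and the lifted
infinitesimal Levi-Civita connection
`B_{(X,Y)}(X',Y') = (A_X X', A_X Y' + A_Y X')` is a pseudo-Riemannian Lie
algebra. -/
theorem semidirect_pseudo_riemannian_iff
    (L : Type*) [LieRing L] [LieAlgebra ℝ L]
    (a : L →ₗ[ℝ] L →ₗ[ℝ] ℝ)
    (hsymm : ∀ x y, a x y = a y x)
    (hnd : ∀ x, (∀ y, a x y = 0) → x = 0)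
    (A : L →ₗ[ℝ] L →ₗ[ℝ] L)
    (hK : ∀ x y z, 2 * a (A x y) z = a ⁅x, y⁆ z + a ⁅z, x⁆ y + a ⁅z, y⁆ x) :
    let br : L × L → L × L → L × L :=
      fun p q => (⁅p.1, q.1⁆, ⁅p.1, q.2⁆ + ⁅p.2, q.1⁆)
    let B : L × L → L × L → L × L :=
      fun p q => (A p.1 q.1, A p.1 q.2 + A p.2 q.1)
    ((∀ X Y Z : L, ⁅A X Y, Z⁆ + ⁅X, A Z Y⁆ = 0) ↔
      (∀ p q r : L × L, br (B p q) r + br p (B r q) = 0)) := by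
  intro br B
  constructor
  · intro h p q r
    have h1 := h p.1 q.1 r.1
    have h2 := h p.1 q.1 r.2
    have h3 := h p.1 q.2 r.1
    have h4 := h p.2 q.1 r.1
    simp only [br, B, Prod.mk_add_mk, Prod.ext_iff, Prod.fst_add, Prod.snd_add]
    refine ⟨h1, ?_⟩
    have key : (⁅A p.1 q.1, r.2⁆ + ⁅p.1, A r.2 q.1⁆) + (⁅A p.1 q.2, r.1⁆ + ⁅p.1, A r.1 q.2⁆)
        + (⁅A p.2 q.1, r.1⁆ + ⁅p.2, A r.1 q.1⁆) = 0 := by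
      rw [h2, h3, h4]; simp
    simp only [lie_add, add_lie]
    abel_nf at key ⊢
    exact key
  · intro h X Y Z
    have := congrArg Prod.fst (h (X, 0) (Y, 0) (Z, 0))
    simpa [br, B] using this
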